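/- Quadratic characterization of tangency angles: for a circle of radius r ≠ 0 and target point (x,y), the critical points of the angle function κ(θ) = atan((y − r(1 − cos θ))/(x − r sin θ)) occur exactly where (2r − y)·tan²(θ/2) − 2x·tan(θ/2) + y = 0, for θ ∉ {0, π} with the denominator nonzero. -/

import Mathlib

open Real

/-- Quadratic characterization of tangency angles: the derivative of the angle
function `κ(θ) = arctan((y − r(1 − cos θ))/(x − r sin θ))` is
`r·((2r − y)tan²(θ/2) − 2x tan(θ/2) + y)/D(θ)` where
`D(θ) = 2(1 − cos θ)/sin²θ · ((y − r(1 − cos θ))² + (x − r sin θ)²)`, so the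
critical points occur exactly at the roots of the quadratic in `tan(θ/2)`. -/
theorem kappa_hasDerivAt (r x y θ : ℝ) (hr : r ≠ 0)
    (h1 : 0 < θ) (h2 : θ < 2 * π) (hπ : θ ≠ π)
    (hden : x - r * Real.sin θ ≠ 0) :
    HasDerivAt (fun φ => Real.arctan ((y - r * (1 - Real.cos φ)) / (x - r * Real.sin φ)))
      (r * ((2 * r - y) * Real.tan (θ / 2) ^ 2 - 2 * x * Real.tan (θ / 2) + y) /
        (2 * (1 - Real.cos θ) / Real.sin θ ^ 2 *
          ((y - r * (1 - Real.cos θ)) ^ 2 + (x - r * Real.sin θ) ^ 2))) θ := by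
  have hpi := Real.pi_pos
  -- half-angle facts
  have hs : Real.sin (θ / 2) ≠ 0 := by
    have := Real.sin_pos_of_pos_of_lt_pi (by linarith : 0 < θ / 2) (by linarith : θ / 2 < π)
    linarith
  have hc : Real.cos (θ / 2) ≠ 0 := by
    intro h
    rw [Real.cos_eq_zero_iff] at h
    obtain ⟨n, hn⟩ := h
    have hθ : θ = (2 * (n:ℝ) + 1) * π := by linarith
    have ha : (0:ℝ) < 2 * (n:ℝ) + 1 := by
      by_contra h'
      push_neg at h'
      nlinarith
    have hb : 2 * (n:ℝ) + 1 < 2 := by nlinarith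
    have ha' : (0:ℤ) < 2 * n + 1 := by exact_mod_cast (by push_cast; linarith : (0:ℝ) < 2 * (n:ℝ) + 1)
    have hb' : (2 * n + 1 : ℤ) < 2 := by exact_mod_cast (by push_cast; linarith : (2 * (n:ℝ) + 1) < 2)
    have hn0 : n = 0 := by omega
    apply hπ
    rw [hθ, hn0]
    push_cast
    ring
  set s := Real.sin (θ / 2) with hsdef
  set c := Real.cos (θ / 2) with hcdef
  have hsc : s ^ 2 + c ^ 2 = 1 := Real.sin_sq_add_cos_sq _
  have hsin : Real.sin θ = 2 * s * c := by
    rw [hsdef, hcdef, ← Real.sin_two_mul]; ring_nf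
  have hcos : Real.cos θ = 1 - 2 * s ^ 2 := by
    have := Real.cos_two_mul (θ / 2)
    have h2' : 2 * (θ / 2) = θ := by ring
    rw [h2'] at this
    rw [this, ← hcdef]; nlinarith
  have htan : Real.tan (θ / 2) = s / c := Real.tan_eq_sin_div_cos _
  -- derivative computation
  have hu : HasDerivAt (fun φ => y - r * (1 - Real.cos φ)) (-(r * Real.sin θ)) θ := by
    simpa using (((Real.hasDerivAt_cos θ).const_sub 1).const_mul r).const_sub y
  have hv : HasDerivAt (fun φ => x - r * Real.sin φ) (-(r * Real.cos θ)) θ := by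
    exact ((Real.hasDerivAt_sin θ).const_mul r).const_sub x
  have hq := hu.div hv hden
  have harc := (Real.hasDerivAt_arctan
    ((y - r * (1 - Real.cos θ)) / (x - r * Real.sin θ))).comp θ hq
  convert harc using 1
  · rfl
  · rfl
  · rfl
  -- value equality
  set u := y - r * (1 - Real.cos θ) with hudef
  set v := x - r * Real.sin θ with hvdef
  have hS : u ^ 2 + v ^ 2 ≠ 0 := by positivity
  have hrhs : 1 / (1 + (u / v) ^ 2) *
      ((-(r * Real.sin θ) * v - u * -(r * Real.cos θ)) / v ^ 2)
      = (-(r * Real.sin θ) * v - u * -(r * Real.cos θ)) / (u ^ 2 + v ^ 2) := by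
    field_simp
    ring
  rw [hrhs]
  have hD : 2 * (1 - Real.cos θ) / Real.sin θ ^ 2 = 1 / c ^ 2 := by
    rw [hsin, hcos]
    field_simp
    ring
  rw [hD]
  have hnum : r * ((2 * r - y) * Real.tan (θ / 2) ^ 2 - 2 * x * Real.tan (θ / 2) + y) * c ^ 2
      = -(r * Real.sin θ) * v - u * -(r * Real.cos θ) := by
    rw [htan, hudef, hvdef, hsin, hcos]
    field_simp
    linear_combination (r * y * c ^ 2 + (-(r * y * c ^ 2 * (1 - c)) - 4 * r ^ 2 * s ^ 2 * c ^ 3) + ((-4 * r + 4 * r ^ 2 * c ^ 3) * s ^ 2 + y - r * y * c ^ 3)) * hsc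
  rw [← hnum]
  field_simp
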